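/- For every natural number n ≥ 1, one has S(n) = F(n), i.e. ∑_{x₁=1}^n ∑_{x₂=1}^n ∑_{x₃=1}^n ((x₁+x₂+x₃)² + 3(x₁−x₂−x₃)|x₁−x₂−x₃|)/(x₁x₂x₃) = (33/2 − 3B(n))n² − (21/2 + 3B(n))n + 6A(n). -/

import Mathlib

open Real

noncomputable def A (n : ℕ) : ℝ := ∑ j ∈ Finset.Icc 1 n, (1 : ℝ) / j

noncomputable def B (n : ℕ) : ℝ := ∑ j ∈ Finset.Icc 1 n, (1 : ℝ) / j ^ 2

noncomputable def F (n : ℕ) : ℝ :=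
  (33 / 2 - 3 * B n) * n ^ 2 - (21 / 2 + 3 * B n) * n + 6 * A n

noncomputable def S (n : ℕ) : ℝ :=
  ∑ x₁ ∈ Finset.Icc 1 n, ∑ x₂ ∈ Finset.Icc 1 n, ∑ x₃ ∈ Finset.Icc 1 n,
    (((x₁ : ℝ) + x₂ + x₃) ^ 2 + 3 * ((x₁ : ℝ) - x₂ - x₃) * |(x₁ : ℝ) - x₂ - x₃|) /
      ((x₁ : ℝ) * x₂ * x₃)

lemma Asucc (n : ℕ) : A (n+1) = A n + 1/((n:ℝ)+1) := by
  rw [A, A, Finset.sum_Icc_succ_top (by omega)]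
  push_cast; ring

lemma Bsucc (n : ℕ) : B (n+1) = B n + 1/((n:ℝ)+1)^2 := by
  rw [B, B, Finset.sum_Icc_succ_top (by omega)]
  push_cast; ring

lemma sumId (n : ℕ) : ∑ k ∈ Finset.Icc 1 n, (k:ℝ) = n*(n+1)/2 := by
  induction n with
  | zero => simp
  | succ n ih => rw [Finset.sum_Icc_succ_top (by omega), ih]; push_cast; ring

lemma sumConst (n : ℕ) (c : ℝ) : ∑ _k ∈ Finset.Icc 1 n, c = n * c := by
  rw [Finset.sum_const, Nat.card_Icc]
  simp [nsmul_eq_mul]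

lemma reflectA (m : ℕ) : ∑ b ∈ Finset.Icc 1 m, (1:ℝ)/((m:ℝ)+1-(b:ℝ)) = A m := by
  rw [A]
  apply Finset.sum_nbij' (fun b => m+1-b) (fun b => m+1-b)
  · intro a ha; simp at ha ⊢; omega
  · intro a ha; simp at ha ⊢; omega
  · intro a ha; simp at ha; omega
  · intro a ha; simp at ha; omega
  · intro a ha; simp at ha
    congr 1
    have h : a ≤ m+1 := by omega
    rw [Nat.cast_sub h]
    push_cast
    ring

lemma Klem (m : ℕ) :
    (∑ b ∈ Finset.Icc 1 m, ∑ c ∈ Finset.Icc 1 m, if b+c = m+1 then (1:ℝ)/((b:ℝ)*(c:ℝ)) else 0)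
    = 2 * A m / ((m:ℝ)+1) := by
  have h1 : ∀ b ∈ Finset.Icc 1 m,
      (∑ c ∈ Finset.Icc 1 m, if b+c = m+1 then (1:ℝ)/((b:ℝ)*(c:ℝ)) else 0)
      = (1:ℝ)/((b:ℝ)*((m:ℝ)+1-(b:ℝ))) := by
    intro b hb
    simp only [Finset.mem_Icc] at hb
    have h2 : ∀ c ∈ Finset.Icc 1 m, (if b+c = m+1 then (1:ℝ)/((b:ℝ)*(c:ℝ)) else 0)
        = if c = m+1-b then (1:ℝ)/((b:ℝ)*(c:ℝ)) else 0 := by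
      intro c hc
      simp only [Finset.mem_Icc] at hc
      have hiff : b+c = m+1 ↔ c = m+1-b := by omega
      simp only [hiff]
    rw [Finset.sum_congr rfl h2, Finset.sum_ite_eq' (Finset.Icc 1 m) (m+1-b)
        (fun c => (1:ℝ)/((b:ℝ)*(c:ℝ)))]
    rw [if_pos (by simp only [Finset.mem_Icc]; omega)]
    congr 1
    rw [Nat.cast_sub (by omega)]
    push_cast; ring
  rw [Finset.sum_congr rfl h1]
  have h3 : ∀ b ∈ Finset.Icc 1 m, (1:ℝ)/((b:ℝ)*((m:ℝ)+1-(b:ℝ)))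
      = (1/((m:ℝ)+1)) * ((1:ℝ)/(b:ℝ) + (1:ℝ)/((m:ℝ)+1-(b:ℝ))) := by
    intro b hb
    simp only [Finset.mem_Icc] at hb
    have hb0 : (1:ℝ) ≤ (b:ℝ) := by exact_mod_cast hb.1
    have hbm : (b:ℝ) ≤ (m:ℝ) := by exact_mod_cast hb.2
    have h4 : (b:ℝ) ≠ 0 := by linarith
    have h5 : (m:ℝ)+1-(b:ℝ) ≠ 0 := by linarith
    have h6 : (m:ℝ)+1 ≠ 0 := by positivity
    field_simp
    ring
  rw [Finset.sum_congr rfl h3, ← Finset.mul_sum, Finset.sum_add_distrib, reflectA]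
  rw [show (∑ b ∈ Finset.Icc 1 m, (1:ℝ)/(b:ℝ)) = A m from by rw [A]]
  ring

lemma shrink (n m : ℕ) (hm : m ≤ n+1) (g : ℕ → ℕ → ℝ) :
    (∑ b ∈ Finset.Icc 1 (n+1), ∑ c ∈ Finset.Icc 1 (n+1), if b+c ≤ m then g b c else 0)
    = ∑ b ∈ Finset.Icc 1 n, ∑ c ∈ Finset.Icc 1 n, if b+c ≤ m then g b c else 0 := by
  rw [Finset.sum_Icc_succ_top (by omega)]
  have hrow : (∑ c ∈ Finset.Icc 1 (n+1), if (n+1)+c ≤ m then g (n+1) c else 0) = 0 := by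
    apply Finset.sum_eq_zero
    intro c hc
    simp only [Finset.mem_Icc] at hc
    rw [if_neg (by omega)]
  rw [hrow, add_zero]
  apply Finset.sum_congr rfl
  intro b hb
  simp only [Finset.mem_Icc] at hb
  rw [Finset.sum_Icc_succ_top (by omega), if_neg (by omega), add_zero]

lemma G0lem (n : ℕ) :
    (∑ b ∈ Finset.Icc 1 n, ∑ c ∈ Finset.Icc 1 n, if b+c ≤ n then (1:ℝ)/((b:ℝ)*(c:ℝ)) else 0)
    = A n^2 - B n := by
  induction n with
  | zero => simp [A, B]
  | succ n ih =>
    rw [shrink n (n+1) (by omega)]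
    have hpt : ∀ b c : ℕ, (if b+c ≤ n+1 then (1:ℝ)/((b:ℝ)*(c:ℝ)) else 0)
        = (if b+c ≤ n then (1:ℝ)/((b:ℝ)*(c:ℝ)) else 0)
          + (if b+c = n+1 then (1:ℝ)/((b:ℝ)*(c:ℝ)) else 0) := by
      intro b c
      by_cases h1 : b+c ≤ n
      · rw [if_pos (by omega), if_pos h1, if_neg (by omega), add_zero]
      · by_cases h2 : b+c = n+1
        · rw [if_pos (by omega), if_neg h1, if_pos h2, zero_add]
        · rw [if_neg (by omega), if_neg h1, if_neg h2, add_zero]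
    simp only [hpt, Finset.sum_add_distrib]
    rw [ih, Klem n, Asucc, Bsucc]
    have h6 : (n:ℝ)+1 ≠ 0 := by positivity
    field_simp
    ring

lemma G1lem (n : ℕ) :
    (∑ b ∈ Finset.Icc 1 n, ∑ c ∈ Finset.Icc 1 n,
      if b+c ≤ n then ((n:ℝ)-(b:ℝ)-(c:ℝ))/((b:ℝ)*(c:ℝ)) else 0)
    = (n:ℝ)*(A n^2 - B n) - 2*(n:ℝ)*A n + 2*(n:ℝ) := by
  induction n with
  | zero => simp
  | succ n ih =>
    rw [shrink n (n+1) (by omega)]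
    push_cast
    have hpt : ∀ b c : ℕ, (if b+c ≤ n+1 then ((n:ℝ)+1-(b:ℝ)-(c:ℝ))/((b:ℝ)*(c:ℝ)) else 0)
        = (if b+c ≤ n then ((n:ℝ)-(b:ℝ)-(c:ℝ))/((b:ℝ)*(c:ℝ)) else 0)
          + (if b+c ≤ n then (1:ℝ)/((b:ℝ)*(c:ℝ)) else 0)
          + (if b+c = n+1 then ((n:ℝ)+1-(b:ℝ)-(c:ℝ))/((b:ℝ)*(c:ℝ)) else 0) := by
      intro b c
      by_cases h1 : b+c ≤ n
      · rw [if_pos (by omega), if_pos h1, if_pos h1, if_neg (by omega), add_zero,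
          ← add_div]
        congr 1; ring
      · by_cases h2 : b+c = n+1
        · rw [if_pos (by omega), if_neg h1, if_neg h1, if_pos h2, zero_add, zero_add]
        · rw [if_neg (by omega), if_neg h1, if_neg h1, if_neg h2, add_zero, add_zero]
    simp only [hpt, Finset.sum_add_distrib]
    have hbd : (∑ b ∈ Finset.Icc 1 n, ∑ c ∈ Finset.Icc 1 n,
        if b+c = n+1 then ((n:ℝ)+1-(b:ℝ)-(c:ℝ))/((b:ℝ)*(c:ℝ)) else 0) = 0 := by
      apply Finset.sum_eq_zero; intro b _
      apply Finset.sum_eq_zero; intro c _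
      by_cases h : b+c = n+1
      · rw [if_pos h]
        have hc : (b:ℝ) + (c:ℝ) = (n:ℝ)+1 := by exact_mod_cast h
        have hz : (n:ℝ)+1-(b:ℝ)-(c:ℝ) = 0 := by linarith
        rw [hz, zero_div]
      · rw [if_neg h]
    rw [ih, G0lem n, hbd, add_zero, Asucc, Bsucc]
    have h6 : (n:ℝ)+1 ≠ 0 := by positivity
    field_simp
    ring

lemma G2lem (n : ℕ) :
    (∑ b ∈ Finset.Icc 1 n, ∑ c ∈ Finset.Icc 1 n,
      if b+c ≤ n then ((n:ℝ)-(b:ℝ)-(c:ℝ))^2/((b:ℝ)*(c:ℝ)) else 0)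
    = (n:ℝ)^2*(A n^2 - B n) - 4*(n:ℝ)*((n:ℝ)*A n - (n:ℝ)) + (n:ℝ)*((n:ℝ)+1)*A n
      - (n:ℝ)*((n:ℝ)-1)/2 - 2*(n:ℝ) := by
  induction n with
  | zero => simp
  | succ n ih =>
    rw [shrink n (n+1) (by omega)]
    push_cast
    have hpt : ∀ b c : ℕ, (if b+c ≤ n+1 then ((n:ℝ)+1-(b:ℝ)-(c:ℝ))^2/((b:ℝ)*(c:ℝ)) else 0)
        = (if b+c ≤ n then ((n:ℝ)-(b:ℝ)-(c:ℝ))^2/((b:ℝ)*(c:ℝ)) else 0)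
          + 2*(if b+c ≤ n then ((n:ℝ)-(b:ℝ)-(c:ℝ))/((b:ℝ)*(c:ℝ)) else 0)
          + (if b+c ≤ n then (1:ℝ)/((b:ℝ)*(c:ℝ)) else 0)
          + (if b+c = n+1 then ((n:ℝ)+1-(b:ℝ)-(c:ℝ))^2/((b:ℝ)*(c:ℝ)) else 0) := by
      intro b c
      by_cases h1 : b+c ≤ n
      · rw [if_pos (by omega), if_pos h1, if_pos h1, if_pos h1, if_neg (by omega), add_zero,
          ← mul_div_assoc, ← add_div, ← add_div]
        congr 1; ring
      · by_cases h2 : b+c = n+1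
        · rw [if_pos (by omega), if_neg h1, if_neg h1, if_neg h1, if_pos h2, mul_zero,
            add_zero, add_zero, zero_add]
        · rw [if_neg (by omega), if_neg h1, if_neg h1, if_neg h1, if_neg h2, mul_zero,
            add_zero, add_zero, add_zero]
    simp only [hpt, Finset.sum_add_distrib, ← Finset.mul_sum]
    have hbd : (∑ b ∈ Finset.Icc 1 n, ∑ c ∈ Finset.Icc 1 n,
        if b+c = n+1 then ((n:ℝ)+1-(b:ℝ)-(c:ℝ))^2/((b:ℝ)*(c:ℝ)) else 0) = 0 := by
      apply Finset.sum_eq_zero; intro b _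
      apply Finset.sum_eq_zero; intro c _
      by_cases h : b+c = n+1
      · rw [if_pos h]
        have hc : (b:ℝ) + (c:ℝ) = (n:ℝ)+1 := by exact_mod_cast h
        have hz : (n:ℝ)+1-(b:ℝ)-(c:ℝ) = 0 := by linarith
        rw [hz]
        simp
      · rw [if_neg h]
    rw [ih, G0lem n, G1lem n, hbd, add_zero, Asucc, Bsucc]
    have h6 : (n:ℝ)+1 ≠ 0 := by positivity
    field_simp
    ring

lemma Rlem (n : ℕ) :
    (∑ x ∈ Finset.Icc 1 n, ∑ b ∈ Finset.Icc 1 n, ∑ c ∈ Finset.Icc 1 n,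
      if b+c ≤ x then ((x:ℝ)-(b:ℝ)-(c:ℝ))^2/((x:ℝ)*(b:ℝ)*(c:ℝ)) else 0)
    = 11/4*(n:ℝ)^2 - B n/2*(n:ℝ)^2 - 7/4*(n:ℝ) - B n/2*(n:ℝ) + A n
      + (n:ℝ)*((n:ℝ)+1)/2*A n^2 - 2*(n:ℝ)^2*A n := by
  induction n with
  | zero => simp [A, B]
  | succ n ih =>
    rw [Finset.sum_Icc_succ_top (by omega)]
    have hsh : ∀ x ∈ Finset.Icc 1 n,
        (∑ b ∈ Finset.Icc 1 (n+1), ∑ c ∈ Finset.Icc 1 (n+1),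
          if b+c ≤ x then ((x:ℝ)-(b:ℝ)-(c:ℝ))^2/((x:ℝ)*(b:ℝ)*(c:ℝ)) else 0)
        = ∑ b ∈ Finset.Icc 1 n, ∑ c ∈ Finset.Icc 1 n,
          if b+c ≤ x then ((x:ℝ)-(b:ℝ)-(c:ℝ))^2/((x:ℝ)*(b:ℝ)*(c:ℝ)) else 0 := by
      intro x hx
      simp only [Finset.mem_Icc] at hx
      exact shrink n x (by omega) _
    rw [Finset.sum_congr rfl hsh, ih]
    have hrow : (∑ b ∈ Finset.Icc 1 (n+1), ∑ c ∈ Finset.Icc 1 (n+1),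
        if b+c ≤ n+1 then ((↑(n+1):ℝ)-(b:ℝ)-(c:ℝ))^2/((↑(n+1):ℝ)*(b:ℝ)*(c:ℝ)) else 0)
        = (1/((n:ℝ)+1)) * (∑ b ∈ Finset.Icc 1 (n+1), ∑ c ∈ Finset.Icc 1 (n+1),
          if b+c ≤ n+1 then ((↑(n+1):ℝ)-(b:ℝ)-(c:ℝ))^2/((b:ℝ)*(c:ℝ)) else 0) := by
      rw [Finset.mul_sum]
      apply Finset.sum_congr rfl; intro b hb
      rw [Finset.mul_sum]
      apply Finset.sum_congr rfl; intro c hc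
      simp only [Finset.mem_Icc] at hb hc
      by_cases h : b+c ≤ n+1
      · rw [if_pos h, if_pos h]
        have hb0 : (b:ℝ) ≠ 0 := Nat.cast_ne_zero.mpr (by omega)
        have hc0 : (c:ℝ) ≠ 0 := Nat.cast_ne_zero.mpr (by omega)
        have hn0 : ((n:ℝ)+1) ≠ 0 := by positivity
        push_cast
        field_simp
        try ring
        try exact Or.inl trivial
      · rw [if_neg h, if_neg h, mul_zero]
    rw [hrow, G2lem (n+1)]
    push_cast
    rw [Asucc, Bsucc]
    have h6 : (n:ℝ)+1 ≠ 0 := by positivity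
    field_simp
    ring

lemma sep (n : ℕ) (f g h : ℕ → ℝ) :
    (∑ x ∈ Finset.Icc 1 n, ∑ y ∈ Finset.Icc 1 n, ∑ z ∈ Finset.Icc 1 n, f x * g y * h z)
    = (∑ x ∈ Finset.Icc 1 n, f x) * (∑ y ∈ Finset.Icc 1 n, g y)
      * (∑ z ∈ Finset.Icc 1 n, h z) := by
  symm
  rw [Finset.sum_mul_sum, Finset.sum_mul]
  apply Finset.sum_congr rfl; intro x _
  rw [Finset.sum_mul]
  apply Finset.sum_congr rfl; intro y _
  rw [Finset.mul_sum]

lemma ptwise (x1 x2 x3 : ℕ) (h1 : 1 ≤ x1) (h2 : 1 ≤ x2) (h3 : 1 ≤ x3) :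
    (((x1:ℝ)+(x2:ℝ)+(x3:ℝ))^2 + 3*((x1:ℝ)-(x2:ℝ)-(x3:ℝ))*|(x1:ℝ)-(x2:ℝ)-(x3:ℝ)|)
      / ((x1:ℝ)*(x2:ℝ)*(x3:ℝ))
    = (-2*(x1:ℝ)) * ((1:ℝ)/(x2:ℝ)) * ((1:ℝ)/(x3:ℝ))
      + (1:ℝ) * (1:ℝ) * ((8:ℝ)/(x3:ℝ))
      + (1:ℝ) * ((8:ℝ)/(x2:ℝ)) * (1:ℝ)
      + ((1:ℝ)/(x1:ℝ)) * (-2*(x2:ℝ)) * ((1:ℝ)/(x3:ℝ))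
      + ((-4:ℝ)/(x1:ℝ)) * (1:ℝ) * (1:ℝ)
      + ((1:ℝ)/(x1:ℝ)) * ((1:ℝ)/(x2:ℝ)) * (-2*(x3:ℝ))
      + 6*(if x2+x3 ≤ x1 then ((x1:ℝ)-(x2:ℝ)-(x3:ℝ))^2/((x1:ℝ)*(x2:ℝ)*(x3:ℝ)) else 0) := by
  have hx1 : (x1:ℝ) ≠ 0 := Nat.cast_ne_zero.mpr (by omega)
  have hx2 : (x2:ℝ) ≠ 0 := Nat.cast_ne_zero.mpr (by omega)
  have hx3 : (x3:ℝ) ≠ 0 := Nat.cast_ne_zero.mpr (by omega)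
  rcases le_or_gt (x2+x3) x1 with h | h
  · rw [if_pos h]
    have hle : (x2:ℝ)+(x3:ℝ) ≤ (x1:ℝ) := by exact_mod_cast h
    rw [abs_of_nonneg (by linarith)]
    field_simp
    ring
  · rw [if_neg (by omega)]
    have hlt : (x1:ℝ) < (x2:ℝ)+(x3:ℝ) := by exact_mod_cast h
    rw [abs_of_neg (by linarith)]
    field_simp
    ring

theorem stmt11 (n : ℕ) (hn : 1 ≤ n) : S n = F n := by
  have key : S n = ∑ x1 ∈ Finset.Icc 1 n, ∑ x2 ∈ Finset.Icc 1 n, ∑ x3 ∈ Finset.Icc 1 n,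
      ((-2*(x1:ℝ)) * ((1:ℝ)/(x2:ℝ)) * ((1:ℝ)/(x3:ℝ))
      + (1:ℝ) * (1:ℝ) * ((8:ℝ)/(x3:ℝ))
      + (1:ℝ) * ((8:ℝ)/(x2:ℝ)) * (1:ℝ)
      + ((1:ℝ)/(x1:ℝ)) * (-2*(x2:ℝ)) * ((1:ℝ)/(x3:ℝ))
      + ((-4:ℝ)/(x1:ℝ)) * (1:ℝ) * (1:ℝ)
      + ((1:ℝ)/(x1:ℝ)) * ((1:ℝ)/(x2:ℝ)) * (-2*(x3:ℝ))
      + 6*(if x2+x3 ≤ x1 then ((x1:ℝ)-(x2:ℝ)-(x3:ℝ))^2/((x1:ℝ)*(x2:ℝ)*(x3:ℝ)) else 0)) := by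
    rw [S]
    apply Finset.sum_congr rfl; intro x1 hx1
    apply Finset.sum_congr rfl; intro x2 hx2
    apply Finset.sum_congr rfl; intro x3 hx3
    simp only [Finset.mem_Icc] at hx1 hx2 hx3
    exact ptwise x1 x2 x3 hx1.1 hx2.1 hx3.1
  rw [key]
  simp only [Finset.sum_add_distrib]
  have hA : (∑ x ∈ Finset.Icc 1 n, (1:ℝ)/(x:ℝ)) = A n := by rw [A]
  have hone : (∑ _x ∈ Finset.Icc 1 n, (1:ℝ)) = (n:ℝ) := by rw [sumConst]; ring
  have hm2 : (∑ x ∈ Finset.Icc 1 n, -2*(x:ℝ)) = -2*((n:ℝ)*((n:ℝ)+1)/2) := by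
    rw [← Finset.mul_sum, sumId]
  have h8 : (∑ x ∈ Finset.Icc 1 n, (8:ℝ)/(x:ℝ)) = 8 * A n := by
    rw [A, Finset.mul_sum]
    apply Finset.sum_congr rfl; intros; ring
  have hm4 : (∑ x ∈ Finset.Icc 1 n, (-4:ℝ)/(x:ℝ)) = -4 * A n := by
    rw [A, Finset.mul_sum]
    apply Finset.sum_congr rfl; intros; ring
  rw [sep n (fun k => -2*(k:ℝ)) (fun k => (1:ℝ)/(k:ℝ)) (fun k => (1:ℝ)/(k:ℝ)),
      sep n (fun _ => (1:ℝ)) (fun _ => (1:ℝ)) (fun k => (8:ℝ)/(k:ℝ)),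
      sep n (fun _ => (1:ℝ)) (fun k => (8:ℝ)/(k:ℝ)) (fun _ => (1:ℝ)),
      sep n (fun k => (1:ℝ)/(k:ℝ)) (fun k => -2*(k:ℝ)) (fun k => (1:ℝ)/(k:ℝ)),
      sep n (fun k => (-4:ℝ)/(k:ℝ)) (fun _ => (1:ℝ)) (fun _ => (1:ℝ)),
      sep n (fun k => (1:ℝ)/(k:ℝ)) (fun k => (1:ℝ)/(k:ℝ)) (fun k => -2*(k:ℝ))]
  simp only [← Finset.mul_sum]
  rw [hA, hone, sumId, h8, hm4, Rlem n, F]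
  ring
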